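/- Let z ∈ M_+^t in the Pinkall–Thorbergsson construction. Then for 1 ≤ α ≤ m, the vectors Q_0^{-1} Q_α z satisfy ⟨Q_0^{-1} Q_α z, z⟩ = 0, ⟨Q_0^{-1} Q_α z, Q_β z⟩ = 0 for 0 ≤ β ≤ m, and ⟨Q_0^{-1} Q_α z, Q_0^{-1} Q_β z⟩ = δ_{αβ} for 1 ≤ α, β ≤ m. In particular {Q_0^{-1} Q_α z : 1 ≤ α ≤ m} is an orthonormal set contained in the tangent space T_z M_+^t. -/

import Mathlib

open Matrix Real

/-- The matrix `Q₀ = diag(tan t · Id, -cot t · Id)` on `ℝ^l ⊕ ℝ^l`. -/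
noncomputable def ptQzero (l : ℕ) (t : ℝ) : Matrix (Fin l ⊕ Fin l) (Fin l ⊕ Fin l) ℝ :=
  Matrix.fromBlocks (Real.tan t • 1) 0 0 (-(Real.cot t • 1))

/-- in the Pinkall–Thorbergsson construction, for `z ∈ M₊ᵗ` and
`1 ≤ α ≤ m`, the vectors `Q₀⁻¹ Q_α z` satisfy `⟨Q₀⁻¹ Q_α z, z⟩ = 0`,
`⟨Q₀⁻¹ Q_α z, Q_β z⟩ = 0` for all `0 ≤ β ≤ m`, and
`⟨Q₀⁻¹ Q_α z, Q₀⁻¹ Q_β z⟩ = δ_{αβ}`; in particular they form an orthonormal set in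
the tangent space `T_z M₊ᵗ` (the orthogonal complement of `span{z, Q₀z, ..., Q_m z}`). -/
theorem statement6 (l m : ℕ) (t : ℝ) (ht0 : 0 < t) (ht : t ≤ π / 4)
    (P : Fin (m + 1) → Matrix (Fin l ⊕ Fin l) (Fin l ⊕ Fin l) ℝ)
    (hSymm : ∀ α, (P α).IsSymm)
    (hCliff : ∀ α β, P α * P β + P β * P α =
      if α = β then (2 : ℝ) • (1 : Matrix (Fin l ⊕ Fin l) (Fin l ⊕ Fin l) ℝ) else 0)
    (hP0 : P 0 = Matrix.fromBlocks 1 0 0 (-1))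
    (Q : Fin (m + 1) → Matrix (Fin l ⊕ Fin l) (Fin l ⊕ Fin l) ℝ)
    (hQ : Q = fun α => if α = 0 then ptQzero l t else P α)
    (z : Fin l ⊕ Fin l → ℝ)
    (hzx : (fun i => z (Sum.inl i)) ⬝ᵥ (fun i => z (Sum.inl i)) = Real.cos t ^ 2)
    (hzy : (fun i => z (Sum.inr i)) ⬝ᵥ (fun i => z (Sum.inr i)) = Real.sin t ^ 2)
    (hM : ∀ α, z ⬝ᵥ (Q α *ᵥ z) = 0) :
    ∀ α : Fin (m + 1), α ≠ 0 →
      ((ptQzero l t)⁻¹ *ᵥ (Q α *ᵥ z)) ⬝ᵥ z = 0 ∧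
      (∀ β : Fin (m + 1), ((ptQzero l t)⁻¹ *ᵥ (Q α *ᵥ z)) ⬝ᵥ (Q β *ᵥ z) = 0) ∧
      (∀ β : Fin (m + 1), β ≠ 0 →
        ((ptQzero l t)⁻¹ *ᵥ (Q α *ᵥ z)) ⬝ᵥ ((ptQzero l t)⁻¹ *ᵥ (Q β *ᵥ z)) =
          if α = β then 1 else 0) := by
  -- basic trig facts
  have htpi2 : t < π / 2 := lt_of_le_of_lt ht (by linarith [pi_pos])
  have hsin : Real.sin t > 0 := Real.sin_pos_of_pos_of_lt_pi ht0 (by linarith [pi_pos])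
  have hcos : Real.cos t > 0 := Real.cos_pos_of_mem_Ioo ⟨by linarith, htpi2⟩
  have hsin' : Real.sin t ≠ 0 := ne_of_gt hsin
  have hcos' : Real.cos t ≠ 0 := ne_of_gt hcos
  have htan : Real.tan t = Real.sin t / Real.cos t := Real.tan_eq_sin_div_cos t
  have hcot : Real.cot t = Real.cos t / Real.sin t := Real.cot_eq_cos_div_sin t
  have hpyth : Real.sin t ^ 2 + Real.cos t ^ 2 = 1 := Real.sin_sq_add_cos_sq t
  -- abbreviations
  set c : ℝ := (Real.cot t - Real.tan t) / 2 with hc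
  set d : ℝ := (Real.cot t + Real.tan t) / 2 with hd
  set P0 : Matrix (Fin l ⊕ Fin l) (Fin l ⊕ Fin l) ℝ := Matrix.fromBlocks 1 0 0 (-1) with hP0def
  -- Q₀ = a•1 + b•P0 and its inverse S = c•1 + d•P0
  have hone : (1 : Matrix (Fin l ⊕ Fin l) (Fin l ⊕ Fin l) ℝ) = Matrix.fromBlocks 1 0 0 1 :=
    (Matrix.fromBlocks_one).symm
  have hQ0 : ptQzero l t
      = ((Real.tan t - Real.cot t) / 2) • (1 : Matrix (Fin l ⊕ Fin l) (Fin l ⊕ Fin l) ℝ)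
        + ((Real.tan t + Real.cot t) / 2) • P0 := by
    rw [hP0def, ptQzero]
    ext x y
    rcases x with i | i <;> rcases y with j | j <;>
      simp [Matrix.fromBlocks, Matrix.one_apply, Matrix.smul_apply, mul_ite] <;>
      split <;> ring
  have hP0sq : P0 * P0 = 1 := by
    rw [hP0def, hone]; simp [Matrix.fromBlocks_multiply]
  have hPT : ∀ α, (P α)ᵀ = P α := fun α => (hSymm α).eq
  have hP0T : P0ᵀ = P0 := by rw [← hP0]; exact hPT 0
  have hPsq : ∀ α, P α * P α = 1 := by
    intro α
    have h := hCliff α α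
    rw [if_pos rfl, ← two_smul ℝ (P α * P α)] at h
    exact smul_right_injective _ (two_ne_zero) h
  have hACm : ∀ α β, α ≠ β → P α * P β = -(P β * P α) := by
    intro α β h
    have h2 := hCliff α β
    rw [if_neg h] at h2
    exact eq_neg_of_add_eq_zero_left h2
  -- left inverse of Q₀
  have hSQ : (c • 1 + d • P0) * ptQzero l t = 1 := by
    have e1 : c * ((Real.tan t - Real.cot t) / 2) + d * ((Real.tan t + Real.cot t) / 2) = 1 := by
      rw [hc, hd, htan, hcot]; field_simp; ring
    have e2 : c * ((Real.tan t + Real.cot t) / 2) + d * ((Real.tan t - Real.cot t) / 2) = 0 := by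
      rw [hc, hd, htan, hcot]; field_simp; ring
    have expand : (c • (1 : Matrix (Fin l ⊕ Fin l) (Fin l ⊕ Fin l) ℝ) + d • P0)
          * (((Real.tan t - Real.cot t) / 2) • 1 + ((Real.tan t + Real.cot t) / 2) • P0)
        = (c * ((Real.tan t - Real.cot t) / 2) + d * ((Real.tan t + Real.cot t) / 2)) • 1
          + (c * ((Real.tan t + Real.cot t) / 2) + d * ((Real.tan t - Real.cot t) / 2)) • P0 := by
      simp only [mul_add, add_mul, smul_mul_assoc, mul_smul_comm, one_mul, mul_one,
        smul_smul, hP0sq]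
      module
    rw [hQ0, expand, e1, e2, one_smul, zero_smul, add_zero]
  have hS : (ptQzero l t)⁻¹ = c • 1 + d • P0 := Matrix.inv_eq_left_inv hSQ
  have hST : (c • (1 : Matrix (Fin l ⊕ Fin l) (Fin l ⊕ Fin l) ℝ) + d • P0)ᵀ
      = c • 1 + d • P0 := by
    rw [Matrix.transpose_add, Matrix.transpose_smul, Matrix.transpose_smul,
      Matrix.transpose_one, hP0T]
  -- bilinear form machinery
  have hBT : ∀ M : Matrix (Fin l ⊕ Fin l) (Fin l ⊕ Fin l) ℝ,
      z ⬝ᵥ (Mᵀ *ᵥ z) = z ⬝ᵥ (M *ᵥ z) := by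
    intro M
    rw [Matrix.mulVec_transpose, dotProduct_comm, ← Matrix.dotProduct_mulVec]
  have hAnti : ∀ M : Matrix (Fin l ⊕ Fin l) (Fin l ⊕ Fin l) ℝ,
      Mᵀ = -M → z ⬝ᵥ (M *ᵥ z) = 0 := by
    intro M h
    have h1 := hBT M
    rw [h, Matrix.neg_mulVec, dotProduct_neg] at h1
    linarith
  have hbil : ∀ M N : Matrix (Fin l ⊕ Fin l) (Fin l ⊕ Fin l) ℝ,
      (M *ᵥ z) ⬝ᵥ (N *ᵥ z) = z ⬝ᵥ ((Mᵀ * N) *ᵥ z) := by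
    intro M N
    conv_rhs => rw [← Matrix.mulVec_mulVec, Matrix.dotProduct_mulVec, Matrix.vecMul_transpose]
  -- values of the bilinear form
  have hz1 : z ⬝ᵥ z = 1 := by
    have hsplit : z ⬝ᵥ z
        = ((fun i => z (Sum.inl i)) ⬝ᵥ fun i => z (Sum.inl i))
          + ((fun i => z (Sum.inr i)) ⬝ᵥ fun i => z (Sum.inr i)) := by
      simp [dotProduct, Fintype.sum_sum_type]
    rw [hsplit, hzx, hzy]; linarith
  have hzelim : z = Sum.elim (fun i => z (Sum.inl i)) (fun i => z (Sum.inr i)) := by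
    funext x; cases x <;> rfl
  have hBP0 : z ⬝ᵥ (P0 *ᵥ z) = Real.cos t ^ 2 - Real.sin t ^ 2 := by
    rw [hP0def]
    conv_lhs => rw [hzelim, Matrix.fromBlocks_mulVec]
    rw [Matrix.one_mulVec, Matrix.zero_mulVec, Matrix.zero_mulVec, Matrix.neg_mulVec,
      Matrix.one_mulVec, add_zero, zero_add, sumElim_dotProduct_sumElim,
      dotProduct_neg]
    simp only [Sum.elim_comp_inl, Sum.elim_comp_inr]
    rw [hzx, hzy]; ring
  have hBP : ∀ α, α ≠ (0 : Fin (m + 1)) → z ⬝ᵥ (P α *ᵥ z) = 0 := by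
    intro α hα
    have h := hM α
    rw [hQ] at h
    simpa [hα] using h
  have hBanti2 : ∀ α β, α ≠ β → z ⬝ᵥ ((P α * P β) *ᵥ z) = 0 := by
    intro α β h
    apply hAnti
    rw [Matrix.transpose_mul, hPT, hPT, hACm β α h.symm]
  have hBP0α : ∀ α, α ≠ (0 : Fin (m + 1)) → z ⬝ᵥ ((P0 * P α) *ᵥ z) = 0 := by
    intro α hα
    rw [← hP0]
    exact hBanti2 0 α (Ne.symm hα)
  have hBαP0β : ∀ α β, α ≠ (0 : Fin (m + 1)) → β ≠ (0 : Fin (m + 1)) →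
      z ⬝ᵥ ((P α * (P0 * P β)) *ᵥ z)
        = if α = β then -(Real.cos t ^ 2 - Real.sin t ^ 2) else 0 := by
    intro α β hα hβ
    rw [← hP0]
    by_cases hab : α = β
    · subst hab
      have h1 : P α * (P 0 * P α) = -(P 0) := by
        rw [← mul_assoc, hACm α 0 hα, neg_mul, mul_assoc, hPsq α, mul_one]
      rw [h1, if_pos rfl, Matrix.neg_mulVec, dotProduct_neg, hP0, hBP0]
    · rw [if_neg hab]
      apply hAnti
      have h2 : P β * P α = -(P α * P β) := hACm β α (fun h => hab h.symm)
      have h3 : P 0 * P α = -(P α * P 0) := hACm 0 α (Ne.symm hα)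
      have h1 : P β * P 0 * P α = -(P α * (P 0 * P β)) :=
        calc P β * P 0 * P α = -(P 0 * P β) * P α := by rw [hACm β 0 hβ]
          _ = -(P 0 * (P β * P α)) := by rw [neg_mul, mul_assoc]
          _ = P 0 * (P α * P β) := by rw [h2, mul_neg, neg_neg]
          _ = (P 0 * P α) * P β := by rw [mul_assoc]
          _ = -(P α * P 0) * P β := by rw [h3]
          _ = -(P α * (P 0 * P β)) := by rw [neg_mul, mul_assoc]
      rw [Matrix.transpose_mul, Matrix.transpose_mul, hPT, hPT, hPT]
      exact h1
  -- expansion of the sandwiched bilinear form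
  have hexp : ∀ (u v : ℝ) (M N : Matrix (Fin l ⊕ Fin l) (Fin l ⊕ Fin l) ℝ),
      z ⬝ᵥ ((M * ((u • 1 + v • P0) * N)) *ᵥ z)
        = u * (z ⬝ᵥ ((M * N) *ᵥ z)) + v * (z ⬝ᵥ ((M * (P0 * N)) *ᵥ z)) := by
    intro u v M N
    rw [add_mul, smul_mul_assoc, smul_mul_assoc, one_mul, mul_add, mul_smul_comm,
      mul_smul_comm, Matrix.add_mulVec, Matrix.smul_mulVec, Matrix.smul_mulVec,
      dotProduct_add, dotProduct_smul, dotProduct_smul, smul_eq_mul, smul_eq_mul]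
  -- main proof
  intro α hα
  have hQα : Q α = P α := by rw [hQ]; simp [hα]
  refine ⟨?_, ?_, ?_⟩
  · rw [hQα, hS, Matrix.mulVec_mulVec, dotProduct_comm, add_mul, smul_mul_assoc,
      smul_mul_assoc, one_mul, Matrix.add_mulVec, Matrix.smul_mulVec,
      Matrix.smul_mulVec, dotProduct_add, dotProduct_smul, dotProduct_smul,
      smul_eq_mul, smul_eq_mul, hBP α hα, hBP0α α hα]
    ring
  · intro β
    rw [hQα, hS, Matrix.mulVec_mulVec, hbil, Matrix.transpose_mul, hPT, hST]
    by_cases hβ : β = 0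
    · subst hβ
      have hQ0' : Q 0 = ptQzero l t := by rw [hQ]; simp
      rw [hQ0', mul_assoc, hSQ, mul_one]
      exact hBP α hα
    · have hQβ : Q β = P β := by rw [hQ]; simp [hβ]
      rw [hQβ, mul_assoc, hexp c d (P α) (P β)]
      by_cases hab : α = β
      · subst hab
        rw [hPsq α, Matrix.one_mulVec, hz1, hBαP0β α α hα hα, if_pos rfl, hc, hd, htan, hcot]
        field_simp
        linear_combination (Real.sin t ^ 2 - Real.cos t ^ 2) * hpyth
      · rw [hBanti2 α β hab, hBαP0β α β hα hβ, if_neg hab]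
        ring
  · intro β hβ
    have hQβ : Q β = P β := by rw [hQ]; simp [hβ]
    rw [hQα, hQβ, hS, Matrix.mulVec_mulVec, Matrix.mulVec_mulVec, hbil,
      Matrix.transpose_mul, hPT, hST]
    have hSS : (c • (1 : Matrix (Fin l ⊕ Fin l) (Fin l ⊕ Fin l) ℝ) + d • P0)
          * ((c • 1 + d • P0) * P β)
        = ((c ^ 2 + d ^ 2) • 1 + (2 * c * d) • P0) * P β := by
      rw [← mul_assoc]
      congr 1
      simp only [mul_add, add_mul, smul_mul_assoc, mul_smul_comm, one_mul, mul_one,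
        smul_smul, hP0sq]
      module
    rw [mul_assoc, hSS, hexp (c ^ 2 + d ^ 2) (2 * c * d) (P α) (P β)]
    by_cases hab : α = β
    · subst hab
      rw [hPsq α, Matrix.one_mulVec, hz1, hBαP0β α α hα hα, if_pos rfl, if_pos rfl,
        hc, hd, htan, hcot]
      field_simp
      ring_nf
      linear_combination (-2 * (Real.cos t ^ 2 - Real.sin t ^ 2) ^ 2) * hpyth
    · rw [hBanti2 α β hab, hBαP0β α β hα hβ, if_neg hab, if_neg hab]
      ring
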